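/- Let (W,S) be a Coxeter system with generators s_i indexed by a set B. Let i_1,…,i_k ∈ B (k ≥ 2) be pairwise distinct indices such that s_{i_j} and s_{i_{j+1}} do not commute for each 1 ≤ j < k, while s_{i_j} and s_{i_l} commute whenever |j − l| ≥ 2 (so i_1,…,i_k are the vertices, in order, of a path in the Coxeter diagram). Then the word obtained by concatenating (i_1,…,i_k) and (i_1,…,i_{k−1}) is reduced; that is, ℓ( (s_{i_1}⋯s_{i_k})·(s_{i_1}⋯s_{i_{k−1}}) ) = 2k − 1. -/

import Mathlib

open List Real

namespace CoxAux

attribute [local instance] Classical.propDecidable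

lemma mul_end_apply {α : Type*} (f g : Function.End α) (x : α) : (f * g) x = f (g x) := rfl

lemma conj_eq_iff {W : Type*} [Group W] (x y z t : W) :
    (x * t * y = z) ↔ (t = x⁻¹ * z * y⁻¹) := by
  constructor
  · intro h; rw [← h]; group
  · intro h; rw [h]; group

/-! ### Part I : the geometric representation -/

variable {B : Type*}

noncomputable def kk (M : CoxeterMatrix B) (a b : B) : ℝ := - Real.cos (Real.pi / (M a b : ℝ))

lemma kk_diag (M : CoxeterMatrix B) (a : B) : kk M a a = 1 := by simp [kk, M.diagonal a]

lemma kk_comm (M : CoxeterMatrix B) (a b : B) : kk M a b = kk M b a := by rw [kk, kk, M.symmetric]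

noncomputable def gg (M : CoxeterMatrix B) (a : B) : (B →₀ ℝ) →ₗ[ℝ] ℝ :=
  Finsupp.linearCombination ℝ (fun b => kk M a b)

lemma gg_single (M : CoxeterMatrix B) (a b : B) (x : ℝ) :
    gg M a (Finsupp.single b x) = x * kk M a b := by
  simp [gg, Finsupp.linearCombination_single, smul_eq_mul]

noncomputable def rr (M : CoxeterMatrix B) (a : B) : Function.End (B →₀ ℝ) :=
  fun v => v - (2 * gg M a v) • Finsupp.single a (1:ℝ)

lemma rr_apply (M : CoxeterMatrix B) (a : B) (v : B →₀ ℝ) :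
    rr M a v = v - (2 * gg M a v) • Finsupp.single a (1:ℝ) := rfl

lemma rr_braid (M : CoxeterMatrix B) (a b : B) : (rr M a * rr M b) ^ (M a b) = 1 := by
  rcases eq_or_ne a b with rfl | hab
  · rw [M.diagonal a, pow_one]
    funext v
    show rr M a (rr M a v) = v
    rw [rr_apply, rr_apply, map_sub, map_smul, gg_single, kk_diag, mul_one, smul_eq_mul]
    module
  · set m := M a b with hm
    rcases Nat.eq_zero_or_pos m with hm0 | hmpos
    · rw [hm0, pow_zero]
    have hm1 : m ≠ 1 := M.off_diagonal a b hab
    have hm2 : 2 ≤ m := by omega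
    set θ : ℝ := Real.pi / (m : ℝ) with hθ
    set c : ℝ := Real.cos θ with hc
    set s : ℝ := Real.sin θ with hs
    have hmr : (2:ℝ) ≤ (m:ℝ) := by exact_mod_cast hm2
    have hθpos : 0 < θ := by rw [hθ]; positivity
    have hθlt : θ < Real.pi := by
      rw [hθ]
      calc Real.pi / (m:ℝ) ≤ Real.pi / 2 := by
            apply div_le_div_of_nonneg_left Real.pi_pos.le (by norm_num) hmr
          _ < Real.pi := by linarith [Real.pi_pos]
    have hspos : 0 < s := Real.sin_pos_of_pos_of_lt_pi hθpos hθlt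
    have hpy : s^2 + c^2 = 1 := Real.sin_sq_add_cos_sq θ
    have hmθ : (m:ℝ) * θ = Real.pi := by
      rw [hθ]; field_simp
    have hkab : kk M a b = -c := by rw [kk, hc, hθ, ← hm]
    have hkba : kk M b a = -c := by rw [kk_comm, hkab]
    funext v
    show ((rr M a * rr M b) ^ m) v = v
    set δa := Finsupp.single a (1:ℝ) with hδa
    set δb := Finsupp.single b (1:ℝ) with hδb
    set U := gg M a v with hU
    set T := gg M b v with hT
    set X : ℕ → ℝ := fun r =>
      -(U*(1 - Real.cos (2*(r:ℝ)*θ)) + T*(c - Real.cos (2*(r:ℝ)*θ + θ))) with hX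
    set Y : ℕ → ℝ := fun r =>
      -(U*(c - Real.cos (2*(r:ℝ)*θ - θ)) + T*(1 - Real.cos (2*(r:ℝ)*θ))) with hY
    have key : ∀ r : ℕ, s^2 • (((rr M a * rr M b) ^ r) v)
        = s^2 • v + X r • δa + Y r • δb := by
      intro r
      induction r with
      | zero =>
        have hX0 : X 0 = 0 := by
          rw [hX]; push_cast; norm_num
          exact Or.inr (sub_eq_zero.mpr hc)
        have hY0 : Y 0 = 0 := by
          rw [hY]; push_cast
          rw [show 2*(0:ℝ)*θ - θ = -θ by ring, Real.cos_neg]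
          norm_num
          exact Or.inr (sub_eq_zero.mpr hc)
        rw [hX0, hY0, pow_zero]
        show s^2 • v = _
        rw [zero_smul, zero_smul, add_zero, add_zero]
      | succ r ih =>
        have hw : ((rr M a * rr M b) ^ (r+1)) v
            = rr M a (rr M b (((rr M a * rr M b) ^ r) v)) := by
          rw [pow_succ']; rfl
        set w := ((rr M a * rr M b) ^ r) v with hwdef
        have hga : gg M a (s^2 • w) = U*s^2 + X r - c * Y r := by
          rw [ih]
          rw [map_add, map_add, map_smul, map_smul, map_smul, ← hU,
            gg_single, gg_single, kk_diag, hkab]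
          simp only [smul_eq_mul]; ring
        have hgb : gg M b (s^2 • w) = T*s^2 - c * X r + Y r := by
          rw [ih]
          rw [map_add, map_add, map_smul, map_smul, map_smul, ← hT,
            gg_single, gg_single, kk_diag, hkba]
          simp only [smul_eq_mul]; ring
        set Pa := U*s^2 + X r - c * Y r with hPa
        set Pb := T*s^2 - c * X r + Y r with hPb
        have hvec : s^2 • (((rr M a * rr M b) ^ (r+1)) v)
            = s^2 • v + (X r - 2*(Pa + 2*c*Pb)) • δa + (Y r - 2*Pb) • δb := by
          rw [hw, rr_apply, rr_apply]
          have hgaw : gg M a (w - (2 * gg M b w) • δb)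
              = gg M a w + 2 * c * gg M b w := by
            rw [map_sub, map_smul, smul_eq_mul, hδb, gg_single, hkab]; ring
          rw [hgaw]
          have e1 : s^2 * gg M a w = Pa := by
            rw [← hga, map_smul, smul_eq_mul]
          have e2 : s^2 * gg M b w = Pb := by
            rw [← hgb, map_smul, smul_eq_mul]
          rw [smul_sub, smul_sub, smul_smul, smul_smul, ih]
          rw [show s^2 * (2 * (gg M a w + 2 * c * gg M b w))
              = 2*(Pa + 2*c*Pb) by rw [← e1, ← e2]; ring]
          rw [show s^2 * (2 * gg M b w) = 2*Pb by rw [← e2]; ring]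
          module
        rw [hvec]
        have hXs : X (r+1) = X r - 2*(Pa + 2*c*Pb) := by
          rw [hPa, hPb, hX, hY]
          push_cast
          rw [show 2*((r:ℝ)+1)*θ = (2*(r:ℝ)*θ) + 2*θ by ring,
              show (2*(r:ℝ)*θ) + 2*θ + θ = ((2*(r:ℝ)*θ) + 2*θ) + θ by ring,
              show 2*(r:ℝ)*θ - θ = (2*(r:ℝ)*θ) - θ by ring]
          rw [Real.cos_add ((2*(r:ℝ)*θ) + 2*θ) θ,
              Real.cos_add (2*(r:ℝ)*θ) (2*θ), Real.sin_add (2*(r:ℝ)*θ) (2*θ),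
              Real.cos_add (2*(r:ℝ)*θ) θ, Real.cos_sub (2*(r:ℝ)*θ) θ,
              Real.cos_two_mul θ, Real.sin_two_mul θ, ← hc, ← hs]
          linear_combination (4*T*c - 2*T*c*Real.cos (2*(r:ℝ)*θ) + 2*U) * hpy
        have hYs : Y (r+1) = Y r - 2*Pb := by
          rw [hPb, hX, hY]
          push_cast
          rw [show 2*((r:ℝ)+1)*θ = (2*(r:ℝ)*θ) + 2*θ by ring,
              show (2*(r:ℝ)*θ) + 2*θ - θ = (2*(r:ℝ)*θ) + θ by ring]
          rw [Real.cos_add (2*(r:ℝ)*θ) (2*θ),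
              Real.cos_add (2*(r:ℝ)*θ) θ, Real.cos_sub (2*(r:ℝ)*θ) θ,
              Real.cos_two_mul θ, Real.sin_two_mul θ, ← hc, ← hs]
          linear_combination (2*T) * hpy
        rw [hXs, hYs]
    have hcos2m : Real.cos (2*(m:ℝ)*θ) = 1 := by
      rw [show 2*(m:ℝ)*θ = 2*Real.pi by rw [mul_assoc, hmθ]]
      exact Real.cos_two_pi
    have hXm : X m = 0 := by
      simp only [hX]
      rw [hcos2m, show 2*(m:ℝ)*θ + θ = 2*Real.pi + θ by rw [mul_assoc, hmθ]]
      rw [Real.cos_add, Real.cos_two_pi, Real.sin_two_pi, ← hc]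
      ring
    have hYm : Y m = 0 := by
      simp only [hY]
      rw [hcos2m, show 2*(m:ℝ)*θ - θ = 2*Real.pi - θ by rw [mul_assoc, hmθ]]
      rw [Real.cos_sub, Real.cos_two_pi, Real.sin_two_pi, ← hc]
      ring
    have := key m
    rw [hXm, hYm, zero_smul, zero_smul, add_zero, add_zero] at this
    have hs2 : s^2 ≠ 0 := by positivity
    exact smul_right_injective _ hs2 this

variable {W : Type*} [Group W] {M : CoxeterMatrix B} (cs : CoxeterSystem M W)

lemma rr_liftable : CoxeterMatrix.IsLiftable M (fun i => rr M i) := fun a b => rr_braid M a b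

noncomputable def phiI (cs : CoxeterSystem M W) : W →* Function.End (B →₀ ℝ) :=
  cs.lift ⟨fun i => rr M i, rr_liftable⟩

lemma phiI_simple (i : B) : phiI cs (cs.simple i) = rr M i :=
  cs.lift_apply_simple rr_liftable i

/-- letters avoiding `b` do not move coordinate `b`. -/
lemma phiI_coord_fixed (σ : List B) (b : B) (hb : b ∉ σ) (v : B →₀ ℝ) :
    (phiI cs (cs.wordProd σ) v) b = v b := by
  induction σ generalizing v with
  | nil => rw [cs.wordProd_nil, map_one]; rfl
  | cons i σ ih =>
    have hbi : b ≠ i := by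
      intro h; exact hb (h ▸ (List.mem_cons_self : i ∈ i :: σ))
    have hbσ : b ∉ σ := fun h => hb (List.mem_cons_of_mem i h)
    rw [cs.wordProd_cons, map_mul, mul_end_apply, phiI_simple, rr_apply,
      Finsupp.sub_apply, Finsupp.smul_apply, Finsupp.single_eq_of_ne hbi,
      smul_zero, sub_zero]
    exact ih hbσ v

/-- test value computation: the simple reflection at `b` moves coordinate `b`. -/
lemma phiI_test1 (b : B) :
    (phiI cs (cs.simple b) (Finsupp.single b (1:ℝ))) b ≠ 1 := by
  rw [phiI_simple, rr_apply, Finsupp.sub_apply, Finsupp.smul_apply,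
    gg_single, kk_diag, Finsupp.single_eq_same, smul_eq_mul]
  norm_num

lemma phiI_test2 (b c : B) (hbc : b ≠ c) (hM1 : M c b ≠ 1) (hM2 : M c b ≠ 2) :
    (phiI cs (cs.simple b * cs.simple c * cs.simple b) (Finsupp.single b (1:ℝ))) b ≠ 1 := by
  have hκ : kk M b c ≠ 0 ∧ kk M b c = kk M c b := by
    constructor
    · rw [kk_comm, kk]
      simp only [neg_ne_zero]
      rcases Nat.eq_zero_or_pos (M c b) with h0 | hpos
      · rw [h0]; norm_num
      · have h3 : 3 ≤ M c b := by omega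
        have hmr : (3:ℝ) ≤ (M c b : ℝ) := by exact_mod_cast h3
        have : Real.pi / ((M c b : ℕ):ℝ) < Real.pi / 2 := by
          apply div_lt_div_of_pos_left Real.pi_pos (by norm_num)
          linarith
        have hgt0 : (0:ℝ) < Real.pi / ((M c b : ℕ):ℝ) := by
          have : (0:ℝ) < ((M c b : ℕ):ℝ) := by linarith
          positivity
        have hgt : -(Real.pi/2) < Real.pi / ((M c b : ℕ):ℝ) := by
          have := Real.pi_pos; linarith
        exact ne_of_gt (Real.cos_pos_of_mem_Ioo ⟨hgt, this⟩)
    · exact kk_comm M b c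
  set κ := kk M b c with hκdef
  set δ := Finsupp.single b (1:ℝ) with hδ
  set η := Finsupp.single c (1:ℝ) with hη
  rw [map_mul, map_mul, mul_end_apply, mul_end_apply, phiI_simple, phiI_simple]
  have h1 : rr M b δ = δ - (2:ℝ) • δ := by
    rw [rr_apply, hδ, gg_single, kk_diag, mul_one]
    norm_num
  have h2 : rr M c (δ - (2:ℝ) • δ) = (δ - (2:ℝ) • δ) + (2*κ) • η := by
    rw [rr_apply, map_sub, map_smul, hδ, gg_single, kk_comm, ← hκdef]
    rw [smul_eq_mul]
    rw [show (2 * (1 * κ - 2 * (1 * κ))) = -(2*κ) by ring, neg_smul, sub_neg_eq_add, hη]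
  have h3 : gg M b ((δ - (2:ℝ) • δ) + (2*κ) • η) = -1 + 2*κ^2 := by
    rw [map_add, map_sub, map_smul, map_smul, hδ, hη, gg_single, gg_single,
      kk_diag, ← hκdef]
    simp only [smul_eq_mul]; ring
  rw [h1, h2, rr_apply, h3]
  rw [Finsupp.sub_apply, Finsupp.add_apply, Finsupp.sub_apply, Finsupp.smul_apply,
    Finsupp.smul_apply, Finsupp.smul_apply, hδ, hη, Finsupp.single_eq_same,
    Finsupp.single_eq_of_ne hbc]
  simp only [smul_eq_mul]
  intro hcontra
  apply hκ.1
  nlinarith [hcontra]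

/-! ### Part II : the permutation representation on `W × ZMod 2` -/

noncomputable def FF (cs : CoxeterSystem M W) : B → Function.End (W × ZMod 2) := fun i p =>
  (cs.simple i * p.1 * cs.simple i, p.2 + if p.1 = cs.simple i then 1 else 0)

lemma FF_apply (i : B) (p : W × ZMod 2) :
    FF cs i p = (cs.simple i * p.1 * cs.simple i,
      p.2 + if p.1 = cs.simple i then 1 else 0) := rfl

lemma FF_iterate (i i' : B) (r : ℕ) (p : W × ZMod 2) :
    ((FF cs i * FF cs i') ^ r) p =
      ((cs.simple i * cs.simple i')^r * p.1 * (cs.simple i' * cs.simple i)^r,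
       p.2 + ∑ q ∈ Finset.range (2*r),
         (if p.1 = (cs.simple i' * cs.simple i)^q * cs.simple i' then (1 : ZMod 2) else 0)) := by
  set a := cs.simple i with ha
  set b := cs.simple i' with hb
  have hsemi : ∀ n : ℕ, b * (a*b)^n = (b*a)^n * b := by
    intro n
    have : SemiconjBy b (a*b) (b*a) := by
      unfold SemiconjBy; rw [mul_assoc]
    exact (this.pow_right n).eq
  have hinvab : ∀ n : ℕ, ((a*b)^n)⁻¹ = (b*a)^n := by
    intro n
    rw [← inv_pow, mul_inv_rev, cs.inv_simple, cs.inv_simple, ← ha, ← hb]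
  have hinvba : ∀ n : ℕ, ((b*a)^n)⁻¹ = (a*b)^n := by
    intro n
    rw [← inv_pow, mul_inv_rev, cs.inv_simple, cs.inv_simple, ← ha, ← hb]
  have hkey1 : ∀ n : ℕ, ((a*b)^n)⁻¹ * b * ((b*a)^n)⁻¹ = (b*a)^(2*n) * b := by
    intro n
    rw [hinvab, hinvba, two_mul, pow_add, mul_assoc, hsemi n, ← mul_assoc]
  have hkey2 : ∀ n : ℕ, ((a*b)^n)⁻¹ * (b*(a*b)) * ((b*a)^n)⁻¹ = (b*a)^(2*n+1) * b := by
    intro n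
    rw [hinvab, hinvba]
    calc (b*a)^n * (b*(a*b)) * (a*b)^n
        = ((b*a)^n * (b*a)) * (b * (a*b)^n) := by simp only [mul_assoc]
      _ = (b*a)^(n+1) * ((b*a)^n * b) := by rw [hsemi n, ← pow_succ]
      _ = ((b*a)^(n+1) * (b*a)^n) * b := by rw [mul_assoc]
      _ = (b*a)^(2*n+1) * b := by
          rw [← pow_add, show n+1+n = 2*n+1 from by omega]
  induction r with
  | zero => simp; rfl
  | succ r ih =>
    have hstep : ((FF cs i * FF cs i') ^ (r+1)) p
        = (FF cs i * FF cs i') (((FF cs i * FF cs i') ^ r) p) := by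
      rw [pow_succ']; rfl
    have happ : ∀ (t : W) (ε : ZMod 2), (FF cs i * FF cs i') (t, ε) =
        (a * (b * t * b) * a, ε + (if t = b then (1:ZMod 2) else 0)
          + (if b * t * b = a then (1:ZMod 2) else 0)) := by
      intro t ε
      simp only [mul_end_apply, FF_apply, ← ha, ← hb]
    rw [hstep, ih, happ]
    have hc1 : ((a*b)^r * p.1 * (b*a)^r = b) ↔ (p.1 = (b*a)^(2*r) * b) := by
      rw [conj_eq_iff, hkey1]
    have hc2 : (b * ((a*b)^r * p.1 * (b*a)^r) * b = a) ↔ (p.1 = (b*a)^(2*r+1) * b) := by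
      rw [conj_eq_iff b b a, show b⁻¹ * a * b⁻¹ = b⁻¹ * (a * b⁻¹) from by rw [mul_assoc]]
      rw [cs.inv_simple, ← hb, conj_eq_iff, hkey2]
    apply Prod.ext
    · show a * (b * ((a*b)^r * p.1 * (b*a)^r) * b) * a = (a*b)^(r+1) * p.1 * (b*a)^(r+1)
      rw [pow_succ' (a*b) r, pow_succ (b*a) r]
      simp only [mul_assoc]
    · show (p.2 + _) + _ + _ = p.2 + _
      rw [if_congr hc1 rfl rfl, if_congr hc2 rfl rfl]
      rw [show 2*(r+1) = (2*r)+1+1 from by ring, Finset.sum_range_succ, Finset.sum_range_succ]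
      ring

lemma FF_liftable : CoxeterMatrix.IsLiftable M (FF cs) := by
  intro i i'
  funext p
  rw [FF_iterate]
  have h1 : (cs.simple i * cs.simple i') ^ (M i i') = 1 := cs.simple_mul_simple_pow i i'
  have h2 : (cs.simple i' * cs.simple i) ^ (M i i') = 1 := cs.simple_mul_simple_pow' i i'
  rw [h1, h2, one_mul, mul_one]
  have hsum : ∑ q ∈ Finset.range (2*(M i i')),
      (if p.1 = (cs.simple i' * cs.simple i)^q * cs.simple i' then (1 : ZMod 2) else 0) = 0 := by
    rw [two_mul, Finset.sum_range_add]
    simp only [pow_add, h2, one_mul]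
    have : ∀ z : ZMod 2, z + z = 0 := by decide
    exact this _
  rw [hsum, add_zero]
  rfl

noncomputable def phiII (cs : CoxeterSystem M W) : W →* Function.End (W × ZMod 2) :=
  cs.lift ⟨FF cs, FF_liftable cs⟩

lemma phiII_simple (i : B) : phiII cs (cs.simple i) = FF cs i :=
  cs.lift_apply_simple (FF_liftable cs) i

noncomputable def nn (cs : CoxeterSystem M W) (w t : W) : ZMod 2 := (phiII cs w (t, 0)).2

noncomputable def cnt (cs : CoxeterSystem M W) (σ : List B) (t : W) : ZMod 2 :=
  ((cs.rightInvSeq σ).map (fun x => if x = t then (1:ZMod 2) else 0)).sum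

lemma phiII_wordProd (σ : List B) (t : W) (ε : ZMod 2) :
    phiII cs (cs.wordProd σ) (t, ε)
      = (cs.wordProd σ * t * (cs.wordProd σ)⁻¹, ε + cnt cs σ t) := by
  induction σ generalizing t ε with
  | nil =>
    rw [cs.wordProd_nil, map_one]
    show (t, ε) = _
    rw [cnt]
    simp
  | cons i σ ih =>
    rw [cs.wordProd_cons, map_mul, mul_end_apply, ih, phiII_simple, FF_apply]
    have hris : cs.rightInvSeq (i :: σ)
        = ((cs.wordProd σ)⁻¹ * cs.simple i * cs.wordProd σ) :: cs.rightInvSeq σ := rfl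
    have hcnt : cnt cs (i :: σ) t
        = cnt cs σ t + (if (cs.wordProd σ)⁻¹ * cs.simple i * cs.wordProd σ = t
            then (1:ZMod 2) else 0) := by
      rw [cnt, hris, List.map_cons, List.sum_cons, cnt]
      ring
    apply Prod.ext
    · show cs.simple i * (cs.wordProd σ * t * (cs.wordProd σ)⁻¹) * cs.simple i = _
      rw [mul_inv_rev, cs.inv_simple]
      simp only [mul_assoc]
    · show (ε + cnt cs σ t) + _ = ε + cnt cs (i :: σ) t
      rw [hcnt]
      have hcond : (cs.wordProd σ * t * (cs.wordProd σ)⁻¹ = cs.simple i)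
          ↔ ((cs.wordProd σ)⁻¹ * cs.simple i * cs.wordProd σ = t) := by
        rw [conj_eq_iff]
        rw [inv_inv]
        exact eq_comm
      rw [if_congr hcond rfl rfl]
      ring

lemma nn_wordProd (σ : List B) (t : W) : nn cs (cs.wordProd σ) t = cnt cs σ t := by
  rw [nn, phiII_wordProd]
  exact zero_add _

lemma phiII_apply (w t : W) (ε : ZMod 2) :
    phiII cs w (t, ε) = (w * t * w⁻¹, ε + nn cs w t) := by
  obtain ⟨σ, rfl⟩ := cs.wordProd_surjective w
  rw [phiII_wordProd, nn_wordProd]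

lemma nn_mul_simple (w : W) (i : B) (t : W) :
    nn cs (w * cs.simple i) t
      = (if t = cs.simple i then (1:ZMod 2) else 0)
        + nn cs w (cs.simple i * t * cs.simple i) := by
  rw [nn, map_mul, mul_end_apply, phiII_simple, FF_apply, phiII_apply]
  show _ + nn cs w _ = _
  rw [zero_add, add_comm]

/-- the key descent criterion -/
lemma length_mul_simple_of_nn_zero (w : W) (i : B) (h : nn cs w (cs.simple i) = 0) :
    cs.length (w * cs.simple i) = cs.length w + 1 := by
  rcases cs.length_mul_simple w i with h' | h'
  · exact h'
  · exfalso
    obtain ⟨σ', hred, hw'⟩ := cs.exists_reduced_word' (w * cs.simple i)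
    have hlen : cs.length (w * cs.simple i) = σ'.length := by
      rw [hw']; exact hred
    have hmem : cs.simple i ∉ cs.rightInvSeq σ' := by
      intro hmem
      obtain ⟨j, hj, hget⟩ := List.getElem_of_mem hmem
      have hj' : j < σ'.length := by
        have := cs.length_rightInvSeq σ'
        omega
      have herase := cs.wordProd_mul_getD_rightInvSeq σ' j
      rw [List.getD_eq_getElem _ _ hj, hget] at herase
      have hww : w = cs.wordProd (σ'.eraseIdx j) := by
        rw [← herase, ← hw', mul_assoc, cs.simple_mul_simple_self, mul_one]
      have hle := cs.length_wordProd_le (σ'.eraseIdx j)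
      rw [← hww] at hle
      have hel : (σ'.eraseIdx j).length + 1 = σ'.length :=
        List.length_eraseIdx_add_one hj'
      omega
    have hcnt0 : cnt cs σ' (cs.simple i) = 0 := by
      rw [cnt]
      apply List.sum_eq_zero
      intro x hx
      obtain ⟨y, hy, rfl⟩ := List.mem_map.mp hx
      rw [if_neg]
      intro hcontra
      exact hmem (hcontra ▸ hy)
    have hnn' : nn cs (w * cs.simple i) (cs.simple i) = 0 := by
      rw [hw', nn_wordProd]
      exact hcnt0
    have : nn cs w (cs.simple i) = 1 := by
      conv_lhs => rw [show w = (w * cs.simple i) * cs.simple i from by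
        rw [mul_assoc, cs.simple_mul_simple_self, mul_one]]
      rw [nn_mul_simple, if_pos rfl]
      rw [show cs.simple i * cs.simple i * cs.simple i = cs.simple i from by
        rw [cs.simple_mul_simple_self, one_mul]]
      rw [hnn', add_zero]
    rw [h] at this
    exact absurd this (by decide)

/-- Entries of the right inversion sequence of a word avoiding `b` fix coordinate `b`;
so any `t` moving coordinate `b` has `nn (π σ) t = 0`. -/
lemma nn_eq_zero_of_avoid (σ : List B) (b : B) (hb : b ∉ σ) (t : W)
    (ht : (phiI cs t (Finsupp.single b (1:ℝ))) b ≠ 1) :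
    nn cs (cs.wordProd σ) t = 0 := by
  rw [nn_wordProd, cnt]
  apply List.sum_eq_zero
  intro x hx
  obtain ⟨y, hy, rfl⟩ := List.mem_map.mp hx
  rw [if_neg]
  intro hcontra
  subst hcontra
  -- y is an entry of the right inversion sequence: a conjugate of a letter of σ
  obtain ⟨j, hj, hget⟩ := List.getElem_of_mem hy
  have hj' : j < σ.length := by
    have := cs.length_rightInvSeq σ
    omega
  have := cs.getD_rightInvSeq σ j
  rw [List.getD_eq_getElem _ _ hj, hget] at this
  have hgetj : σ[j]? = some (σ.get ⟨j, hj'⟩) := List.getElem?_eq_getElem hj'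
  rw [hgetj] at this
  simp only [Option.map_some, Option.getD_some] at this
  -- y = (π d)⁻¹ * s (σ[j]) * π d  with  d = σ.drop (j+1)
  set d := σ.drop (j+1) with hd
  have hword : y = cs.wordProd (d.reverse ++ σ.get ⟨j, hj'⟩ :: d) := by
    rw [cs.wordProd_append, cs.wordProd_cons, cs.wordProd_reverse, this]
    rw [mul_assoc]
  have hbword : b ∉ d.reverse ++ σ.get ⟨j, hj'⟩ :: d := by
    intro hmem
    rcases List.mem_append.mp hmem with h1 | h1
    · exact hb (List.mem_of_mem_drop (List.mem_reverse.mp h1))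
    · rcases List.mem_cons.mp h1 with h2 | h2
      · exact hb (h2 ▸ (σ.get_mem ⟨j, hj'⟩))
      · exact hb (List.mem_of_mem_drop h2)
  have := phiI_coord_fixed cs _ b hbword (Finsupp.single b (1:ℝ))
  rw [← hword] at this
  rw [this, Finsupp.single_eq_same] at ht
  exact ht rfl

/-! ### Part III : the main induction -/

lemma aux_main (σ : List B) :
    σ ≠ [] → σ.Nodup →
    List.Chain' (fun a b => ¬ Commute (cs.simple a) (cs.simple b)) σ →
    (∀ j l : ℕ, ∀ hj : j < σ.length, ∀ hl : l < σ.length, j + 2 ≤ l →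
      Commute (cs.simple (σ.get ⟨j, hj⟩)) (cs.simple (σ.get ⟨l, hl⟩))) →
    cs.length (cs.wordProd (σ ++ σ.dropLast)) = 2 * σ.length - 1 := by
  induction σ using List.reverseRecOn with
  | nil => intro h; exact absurd rfl h
  | append_singleton ω b ih =>
    intro _ hnodup hchain hfar
    rcases eq_or_ne ω [] with rfl | hω
    · simp [CoxeterSystem.length_simple]
    · set c := ω.getLast hω with hc
      have hωd : ω.dropLast ++ [c] = ω := List.dropLast_append_getLast hω
      have hnodup' := List.nodup_append.mp hnodup
      have hbω : b ∉ ω := by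
        intro hmem
        exact hnodup'.2.2 b hmem b (by simp) rfl
      have hnodupω : ω.Nodup := hnodup'.1
      have hchain' := List.isChain_append.mp hchain
      have hchainω := hchain'.1
      have hcb : ¬ Commute (cs.simple c) (cs.simple b) := by
        apply hchain'.2.2 c _ b _
        · rw [List.getLast?_eq_getLast hω]; rfl
        · rfl
      have hbc : b ≠ c := by
        intro h
        exact hcb (h ▸ Commute.refl (cs.simple c))
      have hcω : c ∈ ω := List.getLast_mem hω
      have hlen1 : 1 ≤ ω.length := List.length_pos_iff.mpr hω
      have hfarω : ∀ j l : ℕ, ∀ hj : j < ω.length, ∀ hl : l < ω.length, j + 2 ≤ l →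
          Commute (cs.simple (ω.get ⟨j, hj⟩)) (cs.simple (ω.get ⟨l, hl⟩)) := by
        intro j l hj hl hjl
        have hj2 : j < (ω ++ [b]).length := by
          rw [List.length_append]; omega
        have hl2 : l < (ω ++ [b]).length := by
          rw [List.length_append]; omega
        have := hfar j l hj2 hl2 hjl
        have e1 : (ω ++ [b]).get ⟨j, hj2⟩ = ω.get ⟨j, hj⟩ := by
          simp [List.getElem_append_left hj]
        have e2 : (ω ++ [b]).get ⟨l, hl2⟩ = ω.get ⟨l, hl⟩ := by
          simp [List.getElem_append_left hl]
        rwa [e1, e2] at this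
      have hcommb : ∀ a ∈ ω.dropLast, Commute (cs.simple b) (cs.simple a) := by
        intro a ha
        obtain ⟨j, hj, hget⟩ := List.getElem_of_mem ha
        have hjlen : j < ω.length - 1 := by
          rwa [List.length_dropLast] at hj
        have hj2 : j < (ω ++ [b]).length := by
          rw [List.length_append]; omega
        have hl2 : ω.length < (ω ++ [b]).length := by
          simp only [List.length_append, List.length_singleton]; omega
        have hcom := hfar j ω.length hj2 hl2 (by omega)
        have e1 : (ω ++ [b]).get ⟨j, hj2⟩ = a := by
          rw [List.get_eq_getElem, List.getElem_append_left (by omega : j < ω.length)]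
          rw [← hget]
          exact (List.getElem_dropLast hj).symm ▸ rfl
        have e2 : (ω ++ [b]).get ⟨ω.length, hl2⟩ = b := by
          simp
        rw [e1, e2] at hcom
        exact hcom.symm
      have hIH := ih hω hnodupω hchainω hfarω
      have hQ : cs.wordProd ω = cs.wordProd ω.dropLast * cs.simple c := by
        conv_lhs => rw [← hωd]
        rw [cs.wordProd_append, cs.wordProd_singleton]
      have hcomm : Commute (cs.simple b) (cs.wordProd ω.dropLast) := by
        rw [CoxeterSystem.wordProd]
        apply Commute.list_prod_right
        intro y hy
        obtain ⟨a, ha, rfl⟩ := List.mem_map.mp hy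
        exact hcommb a ha
      have hword : cs.wordProd ((ω ++ [b]) ++ ((ω ++ [b]).dropLast))
          = cs.wordProd (ω ++ ω.dropLast) * cs.simple b * cs.simple c := by
        rw [List.dropLast_concat, cs.wordProd_append, cs.wordProd_append,
          cs.wordProd_append, cs.wordProd_singleton, hQ]
        simp only [mul_assoc]
        rw [← mul_assoc (cs.simple b) (cs.wordProd ω.dropLast) (cs.simple c),
          hcomm.eq, mul_assoc]
      set w := cs.wordProd (ω ++ ω.dropLast) with hwdef
      have havoid : b ∉ ω ++ ω.dropLast := by
        intro h
        rcases List.mem_append.mp h with h | h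
        · exact hbω h
        · exact hbω (List.mem_of_mem_dropLast h)
      have hM1 : M c b ≠ 1 := M.off_diagonal c b (Ne.symm hbc)
      have hM2 : M c b ≠ 2 := by
        intro h2
        apply hcb
        have hpow := cs.simple_mul_simple_pow c b
        rw [h2, sq] at hpow
        have hinv : cs.simple c * cs.simple b = (cs.simple c * cs.simple b)⁻¹ :=
          eq_inv_of_mul_eq_one_left hpow
        rw [mul_inv_rev, cs.inv_simple, cs.inv_simple] at hinv
        exact hinv
      have hscb : cs.simple c ≠ cs.simple b := by
        intro h
        exact hcb (h ▸ Commute.refl (cs.simple b))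
      have step1 : cs.length (w * cs.simple b) = cs.length w + 1 := by
        apply length_mul_simple_of_nn_zero
        rw [hwdef]
        exact nn_eq_zero_of_avoid cs _ b havoid _ (phiI_test1 cs b)
      have hnn2 : nn cs (w * cs.simple b) (cs.simple c) = 0 := by
        rw [nn_mul_simple, if_neg hscb, zero_add, hwdef]
        exact nn_eq_zero_of_avoid cs _ b havoid _ (phiI_test2 cs b c hbc hM1 hM2)
      have step2 : cs.length (w * cs.simple b * cs.simple c)
          = cs.length w + 2 := by
        rw [length_mul_simple_of_nn_zero cs (w * cs.simple b) c hnn2, step1]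
      rw [hword, step2, hIH, List.length_append]
      simp only [List.length_singleton]
      omega

end CoxAux

/-- Let `(W, S)` be a Coxeter system with generators indexed by `B`. Let
`ω = (i₁, …, i_k)` (with `k ≥ 2`) be a list of pairwise distinct indices such that
consecutive generators do not commute while generators at distance at least `2` commute
(so `i₁, …, i_k` are the vertices, in order, of a path in the Coxeter diagram). Then the
concatenation of `(i₁, …, i_k)` and `(i₁, …, i_{k-1})` is a reduced word; that is,
`ℓ((s_{i₁} ⋯ s_{i_k}) · (s_{i₁} ⋯ s_{i_{k-1}})) = 2k - 1`. -/
theorem path_word_concat_dropLast_reduced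
    {B : Type*} {W : Type*} [Group W] {M : CoxeterMatrix B} (cs : CoxeterSystem M W)
    (ω : List B) (hk : 2 ≤ ω.length) (hnodup : ω.Nodup)
    (hchain : List.Chain' (fun a b => ¬ Commute (cs.simple a) (cs.simple b)) ω)
    (hfar : ∀ j l : Fin ω.length, j.1 + 2 ≤ l.1 →
      Commute (cs.simple (ω.get j)) (cs.simple (ω.get l))) :
    cs.length (cs.wordProd (ω ++ ω.dropLast)) = 2 * ω.length - 1 := by
  apply CoxAux.aux_main cs ω ?_ hnodup hchain ?_
  · intro h
    rw [h] at hk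
    simp at hk
  · intro j l hj hl hjl
    exact hfar ⟨j, hj⟩ ⟨l, hl⟩ hjl
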